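/- Every connected graph on n ≥ 1 vertices has an r-net of size at most ⌈n/(r+1)⌉, where an r-net is a set V₀ of vertices such that every vertex of the graph is within distance r of some vertex of V₀. -/

import Mathlib

open Finset

private def inclHom {V : Type*} (G : SimpleGraph V) (s : Set V) : G.induce s →g G :=
  ⟨Subtype.val, fun h => h⟩

private lemma dist_induce_le {V : Type*} (G : SimpleGraph V) (s : Set V) (a b : s)
    (hr : (G.induce s).Reachable a b) : G.dist a.val b.val ≤ (G.induce s).dist a b := by
  obtain ⟨p, hp⟩ := hr.exists_walk_length_eq_dist
  calc G.dist a.val b.val ≤ (p.map (inclHom G s)).length := SimpleGraph.dist_le _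
    _ = _ := by rw [SimpleGraph.Walk.length_map, hp]

private lemma key {V : Type*} [Fintype V] [DecidableEq V] (r : ℕ) (hr : 1 ≤ r)
    (G : SimpleGraph V) (s : Finset V) (hne : s.Nonempty)
    (hconn : (G.induce (s : Set V)).Connected) :
    ∃ V₀ : Finset V, V₀ ⊆ s ∧ (∀ v ∈ s, ∃ u ∈ V₀, G.dist u v ≤ r) ∧
      (r + 1) * V₀.card ≤ s.card + r := by
  classical
  induction s using Finset.strongInduction with
  | _ s IH =>
  set H := G.induce (s : Set V) with hH
  obtain ⟨w0, hw0⟩ := hne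
  set w : ↥(s : Set V) := ⟨w0, by simpa using hw0⟩ with hwdef
  set d : ↥(s : Set V) → ℕ := fun x => H.dist w x with hd
  have hdw : d w = 0 := SimpleGraph.dist_self
  have hzero : ∀ x, d x = 0 → x = w := by
    intro x hx
    exact ((hconn.preconnected w x).dist_eq_zero_iff.mp hx).symm
  obtain ⟨vm, -, hvm⟩ := Finset.exists_max_image (univ : Finset ↥(s : Set V)) d ⟨w, mem_univ _⟩
  by_cases hD : d vm ≤ r
  · -- shallow case: single vertex suffices
    refine ⟨{w0}, by simpa using hw0, ?_, ?_⟩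
    · intro v hv
      refine ⟨w0, mem_singleton_self _, ?_⟩
      have h1 : G.dist w0 v ≤ H.dist w ⟨v, by simpa using hv⟩ :=
        dist_induce_le G _ w ⟨v, by simpa using hv⟩ (hconn.preconnected _ _)
      exact h1.trans ((hvm ⟨v, by simpa using hv⟩ (mem_univ _)).trans hD)
    · have : 1 ≤ s.card := Finset.card_pos.mpr ⟨w0, hw0⟩
      rw [Finset.card_singleton]; omega
  · push_neg at hD
    -- parent function
    have hpex : ∀ x : ↥(s : Set V), ∃ y, (d x = 0 → y = w) ∧
        (d x ≠ 0 → H.Adj y x ∧ d y + 1 = d x) := by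
      intro x
      by_cases h0 : d x = 0
      · exact ⟨w, fun _ => rfl, fun h => absurd h0 h⟩
      · obtain ⟨p, hp⟩ := (hconn.preconnected w x).exists_walk_length_eq_dist
        have hpne : ¬ p.reverse.Nil := by
          rw [SimpleGraph.Walk.not_nil_iff_lt_length, SimpleGraph.Walk.length_reverse, hp]
          exact Nat.pos_of_ne_zero h0
        obtain ⟨y, hadj, q, hq⟩ := SimpleGraph.Walk.not_nil_iff.mp hpne
        refine ⟨y, fun h => absurd h h0, fun _ => ⟨hadj.symm, ?_⟩⟩
        have h1 : d y ≤ q.reverse.length := SimpleGraph.dist_le _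
        have h1' : q.reverse.length = q.length := SimpleGraph.Walk.length_reverse _
        have h2 : d x = q.length + 1 := by
          have := congrArg SimpleGraph.Walk.length hq
          rwa [SimpleGraph.Walk.length_reverse, hp, SimpleGraph.Walk.length_cons] at this
        have h3 : d x ≤ d y + 1 := by
          have ht : H.dist w x ≤ H.dist w y + H.dist y x := hconn.dist_triangle
          have ha : H.dist y x ≤ 1 :=
            (SimpleGraph.dist_le (SimpleGraph.Walk.cons hadj.symm SimpleGraph.Walk.nil)).trans
              (by simp)
          calc d x ≤ d y + H.dist y x := ht
            _ ≤ d y + 1 := by omega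
        omega
    choose p hp0 hp1 using hpex
    have hpw : ∀ k, p^[k] w = w := by
      intro k
      induction k with
      | zero => rfl
      | succ k ih => rw [Function.iterate_succ_apply', ih, hp0 w hdw]
    -- depth along iterated parents
    have F1 : ∀ k (x : ↥(s : Set V)), k ≤ d x → d (p^[k] x) = d x - k := by
      intro k
      induction k with
      | zero => intro x _; simp
      | succ k ih =>
        intro x hk
        rw [Function.iterate_succ_apply']
        have h1 : d (p^[k] x) = d x - k := ih x (by omega)
        have h2 : d (p^[k] x) ≠ 0 := by omega
        have := (hp1 (p^[k] x) h2).2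
        omega
    -- distance along iterated parents
    have F2 : ∀ k (x : ↥(s : Set V)), k ≤ d x → H.dist (p^[k] x) x ≤ k := by
      intro k
      induction k with
      | zero => intro x _; simp
      | succ k ih =>
        intro x hk
        have h1 : d (p^[k] x) = d x - k := F1 k x (by omega)
        have h2 : d (p^[k] x) ≠ 0 := by omega
        have hadj := (hp1 (p^[k] x) h2).1
        have ht : H.dist (p^[k+1] x) x ≤ H.dist (p^[k+1] x) (p^[k] x) + H.dist (p^[k] x) x :=
          hconn.dist_triangle
        have ha : H.dist (p^[k+1] x) (p^[k] x) ≤ 1 := by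
          rw [Function.iterate_succ_apply']
          exact (SimpleGraph.dist_le (SimpleGraph.Walk.cons hadj SimpleGraph.Walk.nil)).trans
            (by simp)
        have := ih x (by omega)
        omega
    set u : ↥(s : Set V) := p^[r] vm with hu
    have hdu : d u = d vm - r := F1 r vm (by omega)
    have hdu1 : 1 ≤ d u := by omega
    have huw : u ≠ w := fun h => by rw [h, hdw] at hdu1; omega
    set S : Finset ↥(s : Set V) := univ.filter (fun x => ∃ k, p^[k] x = u) with hS
    have hwS : w ∉ S := by
      simp only [hS, mem_filter, mem_univ, true_and]
      rintro ⟨k, hk⟩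
      exact huw ((hpw k) ▸ hk).symm
    -- membership in S forces bounded distance to u
    have F4 : ∀ x ∈ S, H.dist u x ≤ r := by
      intro x hx
      simp only [hS, mem_filter, mem_univ, true_and] at hx
      obtain ⟨k, hk⟩ := hx
      have hkd : k ≤ d x := by
        by_contra hkd
        push_neg at hkd
        have h1 : d (p^[d x] x) = 0 := by have := F1 (d x) x le_rfl; omega
        have h2 : p^[d x] x = w := hzero _ h1
        have h3 : p^[k] x = w := by
          have : k = (k - d x) + d x := by omega
          rw [this, Function.iterate_add_apply, h2, hpw]
        exact huw (h3 ▸ hk).symm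
      have h5 : d u = d x - k := hk ▸ F1 k x hkd
      have h6 : k ≤ r := by have := hvm x (mem_univ _); omega
      exact hk ▸ (F2 k x hkd).trans h6
    have hSclosed : ∀ (x : ↥(s : Set V)) j, p^[j] x ∈ S → x ∈ S := by
      intro x j hx
      simp only [hS, mem_filter, mem_univ, true_and] at hx ⊢
      obtain ⟨k, hk⟩ := hx
      exact ⟨k + j, by rw [Function.iterate_add_apply]; exact hk⟩
    set T : Finset V := S.image Subtype.val with hT
    have hTs : T ⊆ s := by
      intro v hv
      simp only [hT, mem_image] at hv
      obtain ⟨x, -, hx⟩ := hv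
      simpa using hx ▸ x.property
    have hTcard : r + 1 ≤ T.card := by
      have hinj : Set.InjOn (fun k => (p^[k] vm).val) ↑(range (r+1)) := by
        intro a ha b hb hab
        simp only [coe_range, Set.mem_Iio] at ha hb
        have : p^[a] vm = p^[b] vm := Subtype.ext hab
        have h1 : d (p^[a] vm) = d vm - a := F1 a vm (by omega)
        have h2 : d (p^[b] vm) = d vm - b := F1 b vm (by omega)
        rw [this] at h1; omega
      have hmaps : ∀ k ∈ range (r+1), (p^[k] vm).val ∈ T := by
        intro k hk
        simp only [mem_range] at hk
        simp only [hT, mem_image]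
        refine ⟨p^[k] vm, ?_, rfl⟩
        simp only [hS, mem_filter, mem_univ, true_and]
        exact ⟨r - k, by rw [← Function.iterate_add_apply]; rw [Nat.sub_add_cancel (by omega)]⟩
      calc r + 1 = (range (r+1)).card := by simp
        _ ≤ T.card := Finset.card_le_card_of_injOn _ hmaps hinj
    set s' : Finset V := s \ T with hs'
    have hs's : s' ⊆ s := Finset.sdiff_subset
    have hw0s' : w0 ∈ s' := by
      simp only [hs', mem_sdiff]
      refine ⟨hw0, fun hc => ?_⟩
      simp only [hT, mem_image] at hc
      obtain ⟨x, hxS, hxv⟩ := hc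
      have : x = w := Subtype.ext hxv
      exact hwS (this ▸ hxS)
    -- vertices of s' lift to s, are not in S
    have hmem' : ∀ v ∈ s', v ∈ s := fun v hv => hs's hv
    have hnotS : ∀ (x : ↥(s : Set V)), x.val ∈ s' → x ∉ S := by
      intro x hx hxS
      simp only [hs', mem_sdiff] at hx
      exact hx.2 (by simp only [hT, mem_image]; exact ⟨x, hxS, rfl⟩)
    -- connectivity of induced graph on s'
    have hconn' : (G.induce (s' : Set V)).Connected := by
      rw [SimpleGraph.connected_iff]
      refine ⟨?_, ⟨⟨w0, by simpa using hw0s'⟩⟩⟩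
      have hreach : ∀ n (x : ↥(s' : Set V)),
          d ⟨x.val, by simpa using hmem' x.val (by simpa using x.property)⟩ ≤ n →
          (G.induce (s' : Set V)).Reachable x ⟨w0, by simpa using hw0s'⟩ := by
        intro n
        induction n with
        | zero =>
          intro x hx
          have := hzero _ (Nat.le_zero.mp hx)
          have hxw : x.val = w0 := congrArg Subtype.val this
          rw [show x = (⟨w0, by simpa using hw0s'⟩ : ↥(s' : Set V)) from Subtype.ext hxw]
        | succ n ih =>
          intro x hx
          set x' : ↥(s : Set V) := ⟨x.val, by simpa using hmem' x.val (by simpa using x.property)⟩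
          by_cases h0 : d x' = 0
          · have := hzero _ h0
            have hxw : x.val = w0 := congrArg Subtype.val this
            rw [show x = (⟨w0, by simpa using hw0s'⟩ : ↥(s' : Set V)) from Subtype.ext hxw]
          · have hadj := (hp1 x' h0).1
            have hdp : d (p x') + 1 = d x' := (hp1 x' h0).2
            have hpnotS : p x' ∉ S := by
              intro hc
              exact hnotS x' x.property
                (hSclosed x' 1 (by simpa using hc))
            have hps' : (p x').val ∈ s' := by
              simp only [hs', mem_sdiff]
              refine ⟨by simpa using (p x').property, fun hc => ?_⟩
              simp only [hT, mem_image] at hc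
              obtain ⟨z, hzS, hzv⟩ := hc
              exact hpnotS ((Subtype.ext hzv : z = p x') ▸ hzS)
            have hadj' : (G.induce (s' : Set V)).Adj ⟨(p x').val, by simpa using hps'⟩ x :=
              hadj
            have := ih ⟨(p x').val, by simpa using hps'⟩ (by simpa using by omega)
            exact (hadj'.symm.reachable).trans this
      intro a b
      exact (hreach _ a le_rfl).trans (hreach _ b le_rfl).symm
    -- apply induction hypothesis
    have hss : s' ⊂ s := by
      refine Finset.sdiff_ssubset hTs ?_
      exact Finset.card_pos.mp (by omega)
    obtain ⟨V₀', hsub', hcov', hcard'⟩ := IH s' hss ⟨w0, hw0s'⟩ hconn'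
    have huT : u.val ∈ T := by
      simp only [hT, mem_image]
      exact ⟨u, by simp only [hS, mem_filter, mem_univ, true_and]; exact ⟨0, rfl⟩, rfl⟩
    have huV₀' : u.val ∉ V₀' := by
      intro hc
      have := hsub' hc
      simp only [hs', mem_sdiff] at this
      exact this.2 huT
    refine ⟨insert u.val V₀', ?_, ?_, ?_⟩
    · intro v hv
      rcases Finset.mem_insert.mp hv with h | h
      · exact h ▸ (by simpa using u.property)
      · exact hs's (hsub' h)
    · intro v hv
      by_cases hv' : v ∈ s'
      · obtain ⟨z, hz, hzd⟩ := hcov' v hv'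
        exact ⟨z, Finset.mem_insert_of_mem hz, hzd⟩
      · have hvT : v ∈ T := by
          simp only [hs', mem_sdiff] at hv'
          tauto
        simp only [hT, mem_image] at hvT
        obtain ⟨x, hxS, hxv⟩ := hvT
        refine ⟨u.val, Finset.mem_insert_self _ _, ?_⟩
        have h1 : G.dist u.val x.val ≤ H.dist u x :=
          dist_induce_le G _ u x (hconn.preconnected _ _)
        exact hxv ▸ (h1.trans (F4 x hxS))
    · rw [Finset.card_insert_of_notMem huV₀']
      have h1 : s'.card = s.card - T.card := Finset.card_sdiff_of_subset hTs
      have h2 : T.card ≤ s.card := Finset.card_le_card hTs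
      have : (r+1) * (V₀'.card + 1) = (r+1) * V₀'.card + (r+1) := by ring
      omega

theorem stmt1 (n r : ℕ) (hn : 1 ≤ n) (hr : 1 ≤ r) (G : SimpleGraph (Fin n))
    (hG : G.Connected) :
    ∃ V₀ : Finset (Fin n), (∀ v : Fin n, ∃ u ∈ V₀, G.dist u v ≤ r) ∧
      V₀.card ≤ ⌈(n : ℝ) / (r + 1)⌉₊ := by
  have hconn : (G.induce ((univ : Finset (Fin n)) : Set (Fin n))).Connected := by
    rw [Finset.coe_univ]
    exact ((SimpleGraph.induceUnivIso G).connected_iff).mpr hG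
  obtain ⟨V₀, -, hcov, hcard⟩ := key r hr G univ ⟨⟨0, hn⟩, Finset.mem_univ _⟩ hconn
  refine ⟨V₀, fun v => hcov v (Finset.mem_univ v), ?_⟩
  rw [Finset.card_univ, Fintype.card_fin] at hcard
  rcases Nat.eq_zero_or_pos V₀.card with h0 | h0
  · simp [h0]
  · obtain ⟨c, hc⟩ : ∃ c, V₀.card = c + 1 := ⟨V₀.card - 1, by omega⟩
    rw [hc, Nat.add_one_le_iff, Nat.lt_ceil, lt_div_iff₀ (by positivity)]
    rw [hc] at hcard
    have h1 : (r+1) * c + 1 ≤ n := by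
      have hx : (r+1) * (c+1) = (r+1)*c + (r+1) := by ring
      omega
    have h2 : ((r:ℝ)+1) * c + 1 ≤ n := by exact_mod_cast h1
    nlinarith [h2]
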